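/- Let m ≥ 1 and E_{2m} = { z ∈ ℂ^n : |z_1|^{2m} + |z_2|^2 + ⋯ + |z_n|^2 < 1 }. For any θ ∈ ℝ and any p = (p_1, …, p_n) ∈ E_{2m}, writing p = (p_1, p̂) with p̂ ∈ ℂ^{n−1} and choosing Ψ an automorphism of the unit ball 𝔹^{n−1} with Ψ(p̂) = 0, the map (z_1, ẑ) ↦ ( e^{iθ} (1 − |p̂|^2)^{1/2m} (1 − ⟨ẑ, p̂⟩)^{−1/m} z_1 , Ψ(ẑ) ) maps E_{2m} bijectively onto E_{2m}. -/

import Mathlib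

open scoped InnerProductSpace

open Complex in
noncomputable def moeb {E : Type*} [NormedAddCommGroup E] [InnerProductSpace ℂ E]
    (q z : E) : E :=
  (1 - ⟪q, z⟫_ℂ)⁻¹ •
    (((Real.sqrt (1 - ‖q‖ ^ 2) : ℝ) : ℂ) •
        (z - ((⟪q, z⟫_ℂ) / ((‖q‖ ^ 2 : ℝ) : ℂ)) • q)
      - (1 - (⟪q, z⟫_ℂ) / ((‖q‖ ^ 2 : ℝ) : ℂ)) • q)

section MoebLemmas

open Complex

variable {E : Type*} [NormedAddCommGroup E] [InnerProductSpace ℂ E]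

lemma inner_self_c (q : E) : ⟪q, q⟫_ℂ = ((‖q‖ ^ 2 : ℝ) : ℂ) := by
  rw [inner_self_eq_norm_sq_to_K]; push_cast; rfl

lemma moeb_inner {q : E} (hq : q ≠ 0) (z : E) :
    ⟪q, moeb q z⟫_ℂ = (1 - ⟪q, z⟫_ℂ)⁻¹ * (⟪q, z⟫_ℂ - ((‖q‖ ^ 2 : ℝ) : ℂ)) := by
  have h : (‖q‖ : ℂ) ≠ 0 := by simpa using hq
  simp only [moeb, inner_smul_right, inner_sub_right, inner_self_c]
  push_cast
  field_simp
  ring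

lemma pyth {x y : E} (h : ⟪x, y⟫_ℂ = 0) : ‖x + y‖ ^ 2 = ‖x‖ ^ 2 + ‖y‖ ^ 2 := by
  have := norm_add_sq_eq_norm_sq_add_norm_sq_of_inner_eq_zero x y h
  nlinarith [norm_nonneg (x+y), norm_nonneg x, norm_nonneg y]

lemma moeb_norm {q : E} (hq : q ≠ 0) (hlt : ‖q‖ < 1) (z : E) (hd : 1 - ⟪q, z⟫_ℂ ≠ 0) :
    ‖moeb q z‖ ^ 2 * normSq (1 - ⟪q, z⟫_ℂ) =
      normSq (1 - ⟪q, z⟫_ℂ) - (1 - ‖q‖ ^ 2) * (1 - ‖z‖ ^ 2) := by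
  have hnq : (0:ℝ) < ‖q‖ ^ 2 := pow_pos (norm_pos_iff.mpr hq) 2
  have hnp : ((‖q‖ ^ 2 : ℝ) : ℂ) ≠ 0 := by simpa using hq
  set a := ⟪q, z⟫_ℂ with ha
  set np : ℂ := ((‖q‖ ^ 2 : ℝ) : ℂ) with hnpdef
  set s : ℝ := Real.sqrt (1 - ‖q‖ ^ 2) with hs
  set Q : E := z - (a / np) • q with hQ
  have hQorth : ⟪q, Q⟫_ℂ = 0 := by
    rw [hQ]
    simp only [inner_sub_right, inner_smul_right, inner_self_c, ← hnpdef, ← ha]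
    field_simp
    ring
  have hdecomp : moeb q z = ((1 - a)⁻¹ * (a / np - 1)) • q + ((1 - a)⁻¹ * (s : ℂ)) • Q := by
    rw [moeb, hQ]
    simp only [← ha, ← hnpdef, ← hs]
    match_scalars <;> ring
  have hzdecomp : (a / np) • q + Q = z := by rw [hQ]; abel
  have hz2 : ‖z‖ ^ 2 = Complex.normSq (a / np) * ‖q‖ ^ 2 + ‖Q‖ ^ 2 := by
    rw [← hzdecomp, pyth (by simp [inner_smul_left, inner_smul_right, hQorth])]
    simp only [norm_smul, mul_pow, Complex.sq_norm]
  have hm2 : ‖moeb q z‖ ^ 2 =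
      Complex.normSq ((1 - a)⁻¹ * (a / np - 1)) * ‖q‖ ^ 2
        + Complex.normSq ((1 - a)⁻¹ * (s : ℂ)) * ‖Q‖ ^ 2 := by
    rw [hdecomp, pyth (by simp [inner_smul_left, inner_smul_right, hQorth])]
    simp only [norm_smul, mul_pow, Complex.sq_norm]
  have hs2 : s * s = 1 - ‖q‖ ^ 2 := Real.mul_self_sqrt (by nlinarith [norm_nonneg q])
  have hdn : Complex.normSq (1 - a) ≠ 0 := by simpa using hd
  have hfrac : a / np - 1 = (a - np) / np := by field_simp
  rw [hm2, hz2, hfrac]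
  simp only [map_mul, map_inv₀, map_div₀, hnpdef, Complex.normSq_ofReal,
    Complex.normSq_apply, Complex.sub_re, Complex.sub_im, Complex.one_re, Complex.one_im,
    Complex.ofReal_re, Complex.ofReal_im]
  rw [hs2]
  have hD : (1 - a.re) * (1 - a.re) + (0 - a.im) * (0 - a.im) ≠ 0 := by
    simpa [Complex.normSq_apply, Complex.sub_re, Complex.sub_im] using hdn
  have hnq' : ‖q‖ ^ 2 ≠ 0 := hnq.ne'
  field_simp
  rw [mul_div_cancel_left₀ _ (by simpa only [sq] using hD)]
  ring

lemma moeb_invol {q : E} (hq : q ≠ 0) (hlt : ‖q‖ < 1) (z : E) (hd : 1 - ⟪q, z⟫_ℂ ≠ 0) :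
    moeb q (-(moeb q z)) = -z := by
  have hnp : ((‖q‖ ^ 2 : ℝ) : ℂ) ≠ 0 := by simpa using hq
  set a := ⟪q, z⟫_ℂ with ha
  set np : ℂ := ((‖q‖ ^ 2 : ℝ) : ℂ) with hnpdef
  have h1np : (1:ℂ) - np ≠ 0 := by
    rw [hnpdef, sub_ne_zero]
    intro h
    have : (1:ℝ) = ‖q‖ ^ 2 := by exact_mod_cast h
    nlinarith [norm_nonneg q]
  have hσ : ((Real.sqrt (1 - ‖q‖ ^ 2) : ℝ) : ℂ) * ((Real.sqrt (1 - ‖q‖ ^ 2) : ℝ) : ℂ)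
      = 1 - np := by
    rw [hnpdef, ← Complex.ofReal_mul, Real.mul_self_sqrt (by nlinarith [norm_nonneg q])]
    push_cast; ring
  set σ : ℂ := ((Real.sqrt (1 - ‖q‖ ^ 2) : ℝ) : ℂ) with hσdef
  have hinner : ⟪q, -(moeb q z)⟫_ℂ = (1 - a)⁻¹ * (np - a) := by
    rw [inner_neg_right, moeb_inner hq, ← ha, ← hnpdef]; ring
  have hden : 1 - ⟪q, -(moeb q z)⟫_ℂ = (1 - a)⁻¹ * (1 - np) := by
    rw [hinner]; field_simp
    ring
  conv_lhs => rw [moeb]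
  rw [hden, hinner, moeb]
  simp only [← ha, ← hnpdef, ← hσdef]
  match_scalars
  · field_simp
    linear_combination (-1) * hσ
  · field_simp
    linear_combination a * hσ

lemma moeb_denom_ne {q : E} (hq : ‖q‖ < 1) (z : E) (hz : ‖z‖ < 1) :
    1 - ⟪q, z⟫_ℂ ≠ 0 := by
  intro h
  have h1 : ⟪q, z⟫_ℂ = 1 := by linear_combination -h
  have h2 : ‖⟪q, z⟫_ℂ‖ ≤ ‖q‖ * ‖z‖ := norm_inner_le_norm q z
  rw [h1] at h2
  simp only [norm_one] at h2
  nlinarith [norm_nonneg q, norm_nonneg z]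

end MoebLemmas

/-- The egg domain `E_{2m} ⊂ ℂ × ℂ^{n-1}`, written as a pair
`(z₁, ẑ)` with `ẑ = (z₂, …, z_n)`. -/
def eggDomain (m k : ℕ) : Set (ℂ × EuclideanSpace ℂ (Fin k)) :=
  {z | ‖z.1‖ ^ (2 * m) + ‖z.2‖ ^ 2 < 1}

theorem stmt8 (m k : ℕ) (hm : 1 ≤ m) (θ : ℝ)
    (p : ℂ × EuclideanSpace ℂ (Fin k)) (hp : p ∈ eggDomain m k) (hp2 : p.2 ≠ 0)
    (Ψ : EuclideanSpace ℂ (Fin k) → EuclideanSpace ℂ (Fin k))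
    (hΨ : ∀ z : EuclideanSpace ℂ (Fin k),
      Ψ z = (1 - ⟪p.2, z⟫_ℂ)⁻¹ •
        (((Real.sqrt (1 - ‖p.2‖ ^ 2) : ℝ) : ℂ) •
            (z - ((⟪p.2, z⟫_ℂ) / ((‖p.2‖ ^ 2 : ℝ) : ℂ)) • p.2)
          - (1 - (⟪p.2, z⟫_ℂ) / ((‖p.2‖ ^ 2 : ℝ) : ℂ)) • p.2)) :
    Set.BijOn
      (fun z : ℂ × EuclideanSpace ℂ (Fin k) =>
        (Complex.exp (θ * Complex.I) *
            (((1 - ‖p.2‖ ^ 2) ^ ((1 : ℝ) / (2 * m)) : ℝ) : ℂ) *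
            ((1 - ⟪p.2, z.2⟫_ℂ) ^ (-(1 / (m : ℂ)))) * z.1,
          Ψ z.2))
      (eggDomain m k) (eggDomain m k) := by
  set q := p.2 with hqdef
  have hΨm : ∀ z, Ψ z = moeb q z := hΨ
  have hmR : (m : ℝ) ≠ 0 := Nat.cast_ne_zero.mpr (by omega)
  -- basic facts about q
  have hq2lt : ‖q‖ ^ 2 < 1 := by
    have h0 : (0:ℝ) ≤ ‖p.1‖ ^ (2 * m) := pow_nonneg (norm_nonneg _) _
    have := hp
    simp only [eggDomain, Set.mem_setOf_eq] at this
    linarith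
  have hqlt : ‖q‖ < 1 := by nlinarith [norm_nonneg q]
  have h1nq : (0:ℝ) < 1 - ‖q‖ ^ 2 := by linarith
  -- norm of the first-coordinate multiplier
  have habs : ∀ (v : EuclideanSpace ℂ (Fin k)), 1 - ⟪q, v⟫_ℂ ≠ 0 → ∀ z : ℂ,
      ‖(Complex.exp (θ * Complex.I) *
          (((1 - ‖q‖ ^ 2) ^ ((1 : ℝ) / (2 * m)) : ℝ) : ℂ) *
          ((1 - ⟪q, v⟫_ℂ) ^ (-(1 / (m : ℂ)))) * z)‖ ^ (2 * m)
        = (1 - ‖q‖ ^ 2) * ‖z‖ ^ (2 * m) / Complex.normSq (1 - ⟪q, v⟫_ℂ) := by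
    intro v hd z
    have hexp : -(1 / (m : ℂ)) = ((-(1 / (m : ℝ)) : ℝ) : ℂ) := by push_cast; ring
    rw [norm_mul, norm_mul, norm_mul, Complex.norm_exp_ofReal_mul_I, one_mul, hexp,
      Complex.norm_cpow_real, Complex.norm_real, Real.norm_eq_abs, abs_of_nonneg (Real.rpow_nonneg h1nq.le _)]
    rw [mul_pow, mul_pow]
    have e1 : ((1 - ‖q‖ ^ 2) ^ ((1:ℝ) / (2 * m))) ^ (2 * m) = 1 - ‖q‖ ^ 2 := by
      rw [← Real.rpow_natCast (((1 - ‖q‖ ^ 2) ^ ((1:ℝ) / (2 * m)))) (2 * m),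
        ← Real.rpow_mul h1nq.le]
      rw [show (1:ℝ) / (2 * m) * ((2 * m : ℕ) : ℝ) = 1 by push_cast; field_simp]
      exact Real.rpow_one _
    have e2 : (‖(1 - ⟪q, v⟫_ℂ)‖ ^ (-(1 / (m : ℝ)))) ^ (2 * m)
        = (Complex.normSq (1 - ⟪q, v⟫_ℂ))⁻¹ := by
      rw [← Real.rpow_natCast (‖(1 - ⟪q, v⟫_ℂ)‖ ^ (-(1 / (m : ℝ)))) (2 * m),
        ← Real.rpow_mul (norm_nonneg _)]
      rw [show -(1 / (m:ℝ)) * ((2 * m : ℕ) : ℝ) = -2 by push_cast; field_simp]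
      rw [Real.rpow_neg (norm_nonneg _), show (2:ℝ) = ((2:ℕ):ℝ) by norm_num,
        Real.rpow_natCast, Complex.sq_norm]
    rw [e1, e2]
    ring
  -- the key equivalence
  have key : ∀ z : ℂ × EuclideanSpace ℂ (Fin k), ‖z.2‖ < 1 →
      ((Complex.exp (θ * Complex.I) *
          (((1 - ‖q‖ ^ 2) ^ ((1 : ℝ) / (2 * m)) : ℝ) : ℂ) *
          ((1 - ⟪q, z.2⟫_ℂ) ^ (-(1 / (m : ℂ)))) * z.1, Ψ z.2) ∈ eggDomain m k
        ↔ z ∈ eggDomain m k) := by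
    intro z hz2
    have hd : 1 - ⟪q, z.2⟫_ℂ ≠ 0 := moeb_denom_ne hqlt z.2 hz2
    have hD : (0:ℝ) < Complex.normSq (1 - ⟪q, z.2⟫_ℂ) := Complex.normSq_pos.mpr hd
    have hB := moeb_norm hp2 hqlt z.2 hd
    have hA := habs z.2 hd z.1
    simp only [eggDomain, Set.mem_setOf_eq]
    rw [hA, hΨm]
    have hM : ‖moeb q z.2‖ ^ 2
        = (Complex.normSq (1 - ⟪q, z.2⟫_ℂ) - (1 - ‖q‖ ^ 2) * (1 - ‖z.2‖ ^ 2))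
            / Complex.normSq (1 - ⟪q, z.2⟫_ℂ) := by
      rw [eq_div_iff hD.ne']
      linarith [hB]
    rw [hM, ← add_div, div_lt_one hD]
    constructor
    · intro h
      nlinarith [mul_pos h1nq hD]
    · intro h
      nlinarith [mul_pos h1nq hD]
  have hball : ∀ z ∈ eggDomain m k, ‖z.2‖ < 1 := by
    intro z hz
    simp only [eggDomain, Set.mem_setOf_eq] at hz
    nlinarith [pow_nonneg (norm_nonneg z.1) (2 * m), norm_nonneg z.2]
  refine ⟨fun z hz => (key z (hball z hz)).mpr hz, ?_, ?_⟩
  · -- InjOn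
    intro z hz z' hz' heq
    have hz2 := hball z hz
    have hz2' := hball z' hz'
    have h2 : moeb q z.2 = moeb q z'.2 := by
      have := congrArg Prod.snd heq
      simpa [hΨm] using this
    have e2 : z.2 = z'.2 := by
      have i1 := moeb_invol hp2 hqlt z.2 (moeb_denom_ne hqlt z.2 hz2)
      have i2 := moeb_invol hp2 hqlt z'.2 (moeb_denom_ne hqlt z'.2 hz2')
      rw [h2] at i1
      exact neg_injective (i1.symm.trans i2)
    have h1 := congrArg Prod.fst heq
    simp only at h1
    rw [e2] at h1
    have hfac : Complex.exp (θ * Complex.I) *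
        (((1 - ‖q‖ ^ 2) ^ ((1 : ℝ) / (2 * m)) : ℝ) : ℂ) *
        ((1 - ⟪q, z'.2⟫_ℂ) ^ (-(1 / (m : ℂ)))) ≠ 0 := by
      apply mul_ne_zero (mul_ne_zero (Complex.exp_ne_zero _) ?_) ?_
      · exact Complex.ofReal_ne_zero.mpr (Real.rpow_pos_of_pos h1nq _).ne'
      · intro hc
        exact (moeb_denom_ne hqlt z'.2 hz2') ((Complex.cpow_eq_zero_iff _ _).mp hc).1
    exact Prod.ext (mul_left_cancel₀ hfac h1) e2
  · -- SurjOn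
    intro w hw
    have hw2 := hball w hw
    have hw2sq : ‖w.2‖ ^ 2 < 1 := by nlinarith [norm_nonneg w.2]
    have hdneg : 1 - ⟪q, -w.2⟫_ℂ ≠ 0 := moeb_denom_ne hqlt _ (by simpa using hw2)
    have hΨv : Ψ (-(moeb q (-w.2))) = w.2 := by
      rw [hΨm, moeb_invol hp2 hqlt _ hdneg, neg_neg]
    have hvlt : ‖(-(moeb q (-w.2)) : EuclideanSpace ℂ (Fin k))‖ < 1 := by
      rw [norm_neg]
      have hB := moeb_norm hp2 hqlt (-w.2) hdneg
      rw [norm_neg] at hB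
      have hD : (0:ℝ) < Complex.normSq (1 - ⟪q, -w.2⟫_ℂ) := Complex.normSq_pos.mpr hdneg
      by_contra hcon
      push_neg at hcon
      have h1 : 1 ≤ ‖moeb q (-w.2)‖ ^ 2 := by nlinarith [norm_nonneg (moeb q (-w.2))]
      nlinarith [mul_pos h1nq (show (0:ℝ) < 1 - ‖w.2‖ ^ 2 by linarith), hD, hB]
    have hdv : 1 - ⟪q, (-(moeb q (-w.2)) : EuclideanSpace ℂ (Fin k))⟫_ℂ ≠ 0 :=
      moeb_denom_ne hqlt _ hvlt
    set F : ℂ := Complex.exp (θ * Complex.I) *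
        (((1 - ‖q‖ ^ 2) ^ ((1 : ℝ) / (2 * m)) : ℝ) : ℂ) *
        ((1 - ⟪q, (-(moeb q (-w.2)) : EuclideanSpace ℂ (Fin k))⟫_ℂ) ^ (-(1 / (m : ℂ)))) with hF
    have hFne : F ≠ 0 := by
      apply mul_ne_zero (mul_ne_zero (Complex.exp_ne_zero _) ?_) ?_
      · exact Complex.ofReal_ne_zero.mpr (Real.rpow_pos_of_pos h1nq _).ne'
      · intro hc
        exact hdv ((Complex.cpow_eq_zero_iff _ _).mp hc).1
    have himg : (Complex.exp (θ * Complex.I) *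
          (((1 - ‖q‖ ^ 2) ^ ((1 : ℝ) / (2 * m)) : ℝ) : ℂ) *
          ((1 - ⟪q, (-(moeb q (-w.2)) : EuclideanSpace ℂ (Fin k))⟫_ℂ) ^ (-(1 / (m : ℂ)))) *
          (w.1 / F), Ψ (-(moeb q (-w.2)))) = w := by
      rw [hΨv, ← hF, mul_div_cancel₀ _ hFne]
    refine ⟨(w.1 / F, -(moeb q (-w.2))), ?_, himg⟩
    exact (key (w.1 / F, -(moeb q (-w.2))) hvlt).mp (by rw [himg]; exact hw)
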